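/- If u is a weak subsolution of L_K u + V u = 0 in Ω and u ≤ 0 a.e. on ℝⁿ \ Ω, then u ≤ 0 a.e. on ℝⁿ. -/

import Mathlib

open MeasureTheory Real Filter
open scoped ENNReal RealInnerProductSpace

noncomputable section

/-- Euclidean space ℝⁿ. -/
abbrev En (n : ℕ) := EuclideanSpace ℝ (Fin n)

/-- The squared Gagliardo seminorm `[u]_s²`. -/
def gagliardoSq (n : ℕ) (s : ℝ) (u : En n → ℝ) : ℝ≥0∞ :=
  ∫⁻ p : En n × En n,
    ENNReal.ofReal ((u p.1 - u p.2) ^ 2 * ‖p.1 - p.2‖ ^ (-((n : ℝ) + 2 * s)))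

/-- `K` is a symmetric measurable kernel comparable to `c⬝|y|^{-(n+2s)}`
with ellipticity constants `lam ≤ Lam`. -/
def IsKernel (n : ℕ) (s lam Lam c : ℝ) (K : En n → ℝ) : Prop :=
  Measurable K ∧ (∀ y : En n, K (-y) = K y) ∧
    ∀ y : En n, y ≠ 0 →
      lam * c * ‖y‖ ^ (-((n : ℝ) + 2 * s)) ≤ K y ∧
        K y ≤ Lam * c * ‖y‖ ^ (-((n : ℝ) + 2 * s))

/-- The nonlocal operator `L_K` applied to a test function. -/
def LK (n : ℕ) (K φ : En n → ℝ) (x : En n) : ℝ :=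
  (1 / 2) * ∫ y : En n, (2 * φ x - φ (x + y) - φ (x - y)) * K y

/-- `V ∈ L^q_loc(ℝⁿ)`. -/
def LocLq (n : ℕ) (q : ℝ) (V : En n → ℝ) : Prop :=
  ∀ A : Set (En n), IsCompact A → MemLp V (ENNReal.ofReal q) (volume.restrict A)

/-- The space `X^s_0(Ω)`: measurable functions vanishing a.e. outside `Ω`
with finite Gagliardo seminorm. -/
def Xs0 (n : ℕ) (s : ℝ) (Ω : Set (En n)) : Set (En n → ℝ) :=
  {u | Measurable u ∧ (∀ᵐ x : En n ∂volume, x ∉ Ω → u x = 0) ∧ gagliardoSq n s u < ⊤}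

/-- `∫_Ω V u²`. -/
def VIntSq (n : ℕ) (V : En n → ℝ) (Ω : Set (En n)) (u : En n → ℝ) : ℝ≥0∞ :=
  ∫⁻ x in Ω, ENNReal.ofReal (V x * u x ^ 2)

/-- The space `Y^s_0(Ω) = X^s_0(Ω) ∩ L²_V(Ω)`. -/
def Ys0 (n : ℕ) (s : ℝ) (Ω : Set (En n)) (V : En n → ℝ) : Set (En n → ℝ) :=
  {u | u ∈ Xs0 n s Ω ∧ VIntSq n V Ω u < ⊤}

/-- The squared `Y^s_0(Ω)` norm: `[u]_s² + ∫_Ω V u²`. -/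
def YnormSq (n : ℕ) (s : ℝ) (Ω : Set (En n)) (V : En n → ℝ) (u : En n → ℝ) : ℝ≥0∞ :=
  gagliardoSq n s u + VIntSq n V Ω u

/-- The kernel quadratic form `∬ (u(x)-u(y))² K(x-y) dx dy` (as an `ℝ≥0∞`-integral). -/
def kerSq (n : ℕ) (K : En n → ℝ) (u : En n → ℝ) : ℝ≥0∞ :=
  ∫⁻ p : En n × En n, ENNReal.ofReal ((u p.1 - u p.2) ^ 2 * K (p.1 - p.2))

/-- The bilinear form `(1/2)∬ (u(x)-u(y))(φ(x)-φ(y)) K(x-y) dx dy`. -/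
def bilin (n : ℕ) (K : En n → ℝ) (u φ : En n → ℝ) : ℝ :=
  (1 / 2) * ∫ p : En n × En n, (u p.1 - u p.2) * (φ p.1 - φ p.2) * K (p.1 - p.2)

/-- The energy functional `E_V`. -/
def energy (n : ℕ) (K V f : En n → ℝ) (Ω : Set (En n)) (v : En n → ℝ) : ℝ :=
  (1 / 2) * (kerSq n K v).toReal + (VIntSq n V Ω v).toReal - 2 * ∫ x in Ω, f x * v x

/-- The region `ℝ^{2n}_Ω = (ℝⁿ×ℝⁿ) \ (Ωᶜ×Ωᶜ)`. -/
def R2n (n : ℕ) (Ω : Set (En n)) : Set (En n × En n) := (Ωᶜ ×ˢ Ωᶜ)ᶜ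

/-- The squared Gagliardo seminorm restricted to `ℝ^{2n}_Ω`. -/
def gagliardoSqOn (n : ℕ) (s : ℝ) (Ω : Set (En n)) (u : En n → ℝ) : ℝ≥0∞ :=
  ∫⁻ p in R2n n Ω,
    ENNReal.ofReal ((u p.1 - u p.2) ^ 2 * ‖p.1 - p.2‖ ^ (-((n : ℝ) + 2 * s)))

/-- The kernel quadratic form restricted to `ℝ^{2n}_Ω`. -/
def kerSqOn (n : ℕ) (Ω : Set (En n)) (K : En n → ℝ) (u : En n → ℝ) : ℝ≥0∞ :=
  ∫⁻ p in R2n n Ω, ENNReal.ofReal ((u p.1 - u p.2) ^ 2 * K (p.1 - p.2))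

/-- The bilinear form restricted to `ℝ^{2n}_Ω`. -/
def bilinOn (n : ℕ) (Ω : Set (En n)) (K : En n → ℝ) (u φ : En n → ℝ) : ℝ :=
  (1 / 2) * ∫ p in R2n n Ω, (u p.1 - u p.2) * (φ p.1 - φ p.2) * K (p.1 - p.2)

/-- The energy functional `E_V` with the double integral over `ℝ^{2n}_Ω`. -/
def energyOn (n : ℕ) (Ω : Set (En n)) (K V f : En n → ℝ) (v : En n → ℝ) : ℝ :=
  (1 / 2) * (kerSqOn n Ω K v).toReal + (VIntSq n V Ω v).toReal - 2 * ∫ x in Ω, f x * v x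

/-- `(a⁺-b⁺)² ≤ (a-b)(a⁺-b⁺)` and friends. -/
lemma aux_sq_le (a b : ℝ) : (max a 0 - max b 0) ^ 2 ≤ (a - b) * (max a 0 - max b 0) := by
  rcases le_total a 0 with h1 | h1 <;> rcases le_total b 0 with h2 | h2 <;>
    simp [max_eq_right, max_eq_left, h1, h2] <;> nlinarith

lemma aux_nonneg (a b : ℝ) : 0 ≤ (a - b) * (max a 0 - max b 0) := by
  rcases le_total a 0 with h1 | h1 <;> rcases le_total b 0 with h2 | h2 <;>
    simp [max_eq_right, max_eq_left, h1, h2] <;> nlinarith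

lemma aux_le_sq (a b : ℝ) : (a - b) * (max a 0 - max b 0) ≤ (a - b) ^ 2 := by
  rcases le_total a 0 with h1 | h1 <;> rcases le_total b 0 with h2 | h2 <;>
    simp [max_eq_right, max_eq_left, h1, h2] <;> nlinarith

lemma aux_sq_le_sq (a b : ℝ) : (max a 0 - max b 0) ^ 2 ≤ (a - b) ^ 2 := by
  rcases le_total a 0 with h1 | h1 <;> rcases le_total b 0 with h2 | h2 <;>
    simp [max_eq_right, max_eq_left, h1, h2] <;> nlinarith

lemma aux_max_sq_le (a : ℝ) : (max a 0) ^ 2 ≤ a ^ 2 := by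
  rcases le_total a 0 with h1 | h1 <;> simp [max_eq_right, max_eq_left, h1] <;> nlinarith

lemma aux_self_mul_max (a : ℝ) : 0 ≤ a * max a 0 := by
  rcases le_total a 0 with h1 | h1 <;> simp [max_eq_right, max_eq_left, h1] <;> nlinarith

/-- if `u` is a weak subsolution of `L_K u + V u = 0` in `Ω`
and `u ≤ 0` a.e. on `ℝⁿ \ Ω`, then `u ≤ 0` a.e. on `ℝⁿ`. -/
theorem stmt9 (n : ℕ) (hn : 2 ≤ n) (s : ℝ) (hs0 : 0 < s) (hs1 : s < 1)
    (c lam Lam : ℝ) (hlam : 0 < lam) (hlamLam : lam ≤ Lam) (hc : 0 < c)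
    (hc1 : c * ∫ ξ : En n, (1 - Real.cos (ξ ⟨0, by omega⟩)) * ‖ξ‖ ^ (-((n : ℝ) + 2 * s)) = 1)
    (K : En n → ℝ) (hK : IsKernel n s lam Lam c K)
    (q : ℝ) (hq : (n : ℝ) / (2 * s) < q)
    (V : En n → ℝ) (hVmeas : Measurable V) (hV0 : ∀ x, 0 ≤ V x) (hVq : LocLq n q V)
    (Ω : Set (En n)) (hΩo : IsOpen Ω) (hΩb : Bornology.IsBounded Ω)
    (u : En n → ℝ) (hu_meas : Measurable u)
    (hu_g : gagliardoSqOn n s Ω u < ⊤)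
    (hu_L2 : MemLp u 2 (volume.restrict Ω))
    (hu_V : VIntSq n V Ω u < ⊤)
    (hsub : ∀ φ ∈ Ys0 n s Ω V, (∀ x, 0 ≤ φ x) →
      bilinOn n Ω K u φ + ∫ x in Ω, V x * u x * φ x ≤ 0)
    (hbd : ∀ᵐ x : En n ∂volume, x ∉ Ω → u x ≤ 0) :
    ∀ᵐ x : En n ∂volume, u x ≤ 0 := by
  classical
  set φ : En n → ℝ := fun x => max (u x) 0 with hφdef
  have hφmeas : Measurable φ := hu_meas.max measurable_const
  have hφ0 : ∀ x, 0 ≤ φ x := fun x => le_max_right _ _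
  have hΩm : MeasurableSet Ω := hΩo.measurableSet
  have hR2nm : MeasurableSet (R2n n Ω) := (hΩm.compl.prod hΩm.compl).compl
  have hexp : (0:ℝ) < (n : ℝ) + 2 * s := by
    have : (0:ℝ) ≤ (n:ℝ) := Nat.cast_nonneg n
    nlinarith
  set w : En n × En n → ℝ := fun p => ‖p.1 - p.2‖ ^ (-((n : ℝ) + 2 * s)) with hwdef
  have hw_nonneg : ∀ p, 0 ≤ w p := fun p => Real.rpow_nonneg (norm_nonneg _) _
  have hw_pos : ∀ p : En n × En n, p.1 ≠ p.2 → 0 < w p := fun p hp =>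
    Real.rpow_pos_of_pos (norm_pos_iff.mpr (sub_ne_zero.mpr hp)) _
  have hLamc : (0:ℝ) < Lam * c := mul_pos (lt_of_lt_of_le hlam hlamLam) hc
  have hK_nonneg : ∀ p : En n × En n, p.1 ≠ p.2 → 0 ≤ K (p.1 - p.2) := fun p hp => by
    have := (hK.2.2 (p.1 - p.2) (sub_ne_zero.mpr hp)).1
    have hpos : 0 < lam * c * ‖p.1 - p.2‖ ^ (-((n : ℝ) + 2 * s)) :=
      mul_pos (mul_pos hlam hc) (hw_pos p hp)
    linarith
  have hK_pos : ∀ p : En n × En n, p.1 ≠ p.2 → 0 < K (p.1 - p.2) := fun p hp => by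
    have := (hK.2.2 (p.1 - p.2) (sub_ne_zero.mpr hp)).1
    have hpos : 0 < lam * c * ‖p.1 - p.2‖ ^ (-((n : ℝ) + 2 * s)) :=
      mul_pos (mul_pos hlam hc) (hw_pos p hp)
    linarith
  have hK_upper : ∀ p : En n × En n, p.1 ≠ p.2 → K (p.1 - p.2) ≤ Lam * c * w p := fun p hp =>
    (hK.2.2 (p.1 - p.2) (sub_ne_zero.mpr hp)).2
  -- the integrand
  set g : En n × En n → ℝ := fun p => (u p.1 - u p.2) * (φ p.1 - φ p.2) * K (p.1 - p.2)
    with hgdef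
  have hg_meas : Measurable g :=
    (((hu_meas.comp measurable_fst).sub (hu_meas.comp measurable_snd)).mul
      ((hφmeas.comp measurable_fst).sub (hφmeas.comp measurable_snd))).mul
      (hK.1.comp (measurable_fst.sub measurable_snd))
  have hg_nonneg : ∀ p, 0 ≤ g p := by
    intro p
    by_cases hp : p.1 = p.2
    · simp [hgdef, hp]
    · exact mul_nonneg (aux_nonneg _ _) (hK_nonneg p hp)
  have hg_upper : ∀ p, g p ≤ Lam * c * ((u p.1 - u p.2) ^ 2 * w p) := by
    intro p
    by_cases hp : p.1 = p.2
    · simp only [hgdef, hp, sub_self, zero_mul]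
      positivity
    · calc g p ≤ (u p.1 - u p.2) ^ 2 * K (p.1 - p.2) :=
            mul_le_mul_of_nonneg_right (aux_le_sq _ _) (hK_nonneg p hp)
        _ ≤ (u p.1 - u p.2) ^ 2 * (Lam * c * w p) :=
            mul_le_mul_of_nonneg_left (hK_upper p hp) (by positivity)
        _ = Lam * c * ((u p.1 - u p.2) ^ 2 * w p) := by ring
  have hg_lower : ∀ p, (φ p.1 - φ p.2) ^ 2 * K (p.1 - p.2) ≤ g p := by
    intro p
    by_cases hp : p.1 = p.2
    · simp [hgdef, hp]
    · exact mul_le_mul_of_nonneg_right (aux_sq_le _ _) (hK_nonneg p hp)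
  -- the lintegral of g over R2n is finite
  set L : ℝ≥0∞ := ∫⁻ p in R2n n Ω, ENNReal.ofReal (g p) with hLdef
  have hL_fin : L < ⊤ := by
    have hb : ∀ p : En n × En n, ENNReal.ofReal (g p) ≤
        ENNReal.ofReal (Lam * c) * ENNReal.ofReal ((u p.1 - u p.2) ^ 2 * w p) := by
      intro p
      rw [← ENNReal.ofReal_mul hLamc.le]
      exact ENNReal.ofReal_le_ofReal (hg_upper p)
    calc L ≤ ∫⁻ p in R2n n Ω,
          ENNReal.ofReal (Lam * c) * ENNReal.ofReal ((u p.1 - u p.2) ^ 2 * w p) :=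
          lintegral_mono fun p => hb p
      _ = ENNReal.ofReal (Lam * c) * gagliardoSqOn n s Ω u :=
          lintegral_const_mul' _ _ ENNReal.ofReal_ne_top
      _ < ⊤ := ENNReal.mul_lt_top ENNReal.ofReal_lt_top hu_g
  -- φ belongs to Ys0
  have hbdφ : ∀ᵐ x : En n ∂volume, x ∉ Ω → φ x = 0 := by
    filter_upwards [hbd] with x hx hxΩ
    exact max_eq_right (hx hxΩ)
  have hφYs0 : φ ∈ Ys0 n s Ω V := by
    constructor
    · refine ⟨hφmeas, hbdφ, ?_⟩
      have hsplit : gagliardoSq n s φ =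
          (∫⁻ p in Ωᶜ ×ˢ Ωᶜ, ENNReal.ofReal ((φ p.1 - φ p.2) ^ 2 * w p)) +
          ∫⁻ p in R2n n Ω, ENNReal.ofReal ((φ p.1 - φ p.2) ^ 2 * w p) :=
        (lintegral_add_compl _ (hΩm.compl.prod hΩm.compl)).symm ▸ rfl
      rw [hsplit]
      have h1 : (∫⁻ p in Ωᶜ ×ˢ Ωᶜ, ENNReal.ofReal ((φ p.1 - φ p.2) ^ 2 * w p)) = 0 := by
        set N : Set (En n) := toMeasurable volume {x | ¬ (x ∉ Ω → φ x = 0)} with hNdef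
        have hN0 : volume N = 0 := by
          rw [measure_toMeasurable]
          exact hbdφ
        have hfst : (volume : Measure (En n × En n)) (Prod.fst ⁻¹' N) = 0 := by
          have : Prod.fst ⁻¹' N = N ×ˢ (Set.univ : Set (En n)) := by
            ext p; simp [Set.mem_prod]
          rw [Measure.volume_eq_prod, this, Measure.prod_prod, hN0, zero_mul]
        have hsnd : (volume : Measure (En n × En n)) (Prod.snd ⁻¹' N) = 0 := by
          have : Prod.snd ⁻¹' N = (Set.univ : Set (En n)) ×ˢ N := by
            ext p; simp [Set.mem_prod]
          rw [Measure.volume_eq_prod, this, Measure.prod_prod, hN0, mul_zero]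
        have hae1 : ∀ᵐ p : En n × En n ∂volume, p.1 ∉ N := by
          rw [ae_iff]; simpa using (show volume {a : En n × En n | a.1 ∈ N} = 0 from hfst)
        have hae2 : ∀ᵐ p : En n × En n ∂volume, p.2 ∉ N := by
          rw [ae_iff]; simpa using (show volume {a : En n × En n | a.2 ∈ N} = 0 from hsnd)
        have : ∀ᵐ p : En n × En n ∂(volume.restrict (Ωᶜ ×ˢ Ωᶜ)),
            ENNReal.ofReal ((φ p.1 - φ p.2) ^ 2 * w p) = 0 := by
          have hmem := ae_restrict_mem (μ := volume) (hΩm.compl.prod hΩm.compl)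
          filter_upwards [hmem, ae_restrict_of_ae hae1, ae_restrict_of_ae hae2]
            with p hp hp1 hp2
          have h1 : φ p.1 = 0 := by
            by_contra hne
            refine hp1 (subset_toMeasurable _ _ ?_)
            simp only [Set.mem_setOf_eq]
            push_neg
            exact ⟨hp.1, hne⟩
          have h2 : φ p.2 = 0 := by
            by_contra hne
            refine hp2 (subset_toMeasurable _ _ ?_)
            simp only [Set.mem_setOf_eq]
            push_neg
            exact ⟨hp.2, hne⟩
          simp [h1, h2]
        rw [lintegral_congr_ae this, lintegral_zero]
      rw [h1, zero_add]
      calc (∫⁻ p in R2n n Ω, ENNReal.ofReal ((φ p.1 - φ p.2) ^ 2 * w p))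
          ≤ ∫⁻ p in R2n n Ω, ENNReal.ofReal ((u p.1 - u p.2) ^ 2 * w p) :=
            lintegral_mono fun p => ENNReal.ofReal_le_ofReal
              (mul_le_mul_of_nonneg_right (aux_sq_le_sq _ _) (hw_nonneg p))
        _ < ⊤ := hu_g
    · have hVle : VIntSq n V Ω φ ≤ VIntSq n V Ω u := by
        refine lintegral_mono fun x => ENNReal.ofReal_le_ofReal ?_
        exact mul_le_mul_of_nonneg_left (aux_max_sq_le _) (hV0 x)
      exact lt_of_le_of_lt hVle hu_V
  -- apply the subsolution property
  have hmain := hsub φ hφYs0 hφ0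
  have hVterm : 0 ≤ ∫ x in Ω, V x * u x * φ x := by
    refine setIntegral_nonneg hΩm fun x _ => ?_
    rw [mul_assoc]
    exact mul_nonneg (hV0 x) (aux_self_mul_max _)
  have hbilin_le : bilinOn n Ω K u φ ≤ 0 := by linarith
  -- compute bilinOn via the lintegral
  have hbilin_eq : bilinOn n Ω K u φ = (1 / 2) * L.toReal := by
    unfold bilinOn
    congr 1
    rw [integral_eq_lintegral_of_nonneg_ae
      (Filter.Eventually.of_forall fun p => hg_nonneg p)
      (hg_meas.aestronglyMeasurable)]
  have hL0 : L = 0 := by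
    have h1 : L.toReal ≤ 0 := by
      rw [hbilin_eq] at hbilin_le; linarith
    have h2 : 0 ≤ L.toReal := ENNReal.toReal_nonneg
    have : L.toReal = 0 := le_antisymm h1 h2
    rcases (ENNReal.toReal_eq_zero_iff _).mp this with h | h
    · exact h
    · exact absurd h hL_fin.ne
  -- deduce φ p.1 = φ p.2 a.e. on R2n
  have hae_g : ∀ᵐ p : En n × En n ∂(volume.restrict (R2n n Ω)),
      ENNReal.ofReal (g p) = 0 :=
    (lintegral_eq_zero_iff (hg_meas.ennreal_ofReal)).mp hL0
  have hkey : ∀ᵐ p : En n × En n ∂volume, p ∈ R2n n Ω → (φ p.1 = φ p.2 ∨ p.1 = p.2) := by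
    rw [← ae_restrict_iff' hR2nm]
    filter_upwards [hae_g] with p hp
    by_cases hpd : p.1 = p.2
    · exact Or.inr hpd
    · left
      have hg0 : g p = 0 := le_antisymm (by simpa using ENNReal.ofReal_eq_zero.mp hp)
        (hg_nonneg p)
      have h1 : (φ p.1 - φ p.2) ^ 2 * K (p.1 - p.2) ≤ 0 := hg0 ▸ hg_lower p
      have h2 : (φ p.1 - φ p.2) ^ 2 ≤ 0 :=
        nonpos_of_mul_nonpos_right (by linarith [mul_comm ((φ p.1 - φ p.2) ^ 2) (K (p.1 - p.2)) ▸ h1]) (hK_pos p hpd)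
      have : φ p.1 - φ p.2 = 0 := by nlinarith [sq_nonneg (φ p.1 - φ p.2)]
      linarith
  rw [Measure.volume_eq_prod] at hkey
  have hslice := Measure.ae_ae_of_ae_prod hkey
  -- Ωᶜ has positive measure
  haveI : Nonempty (Fin n) := ⟨⟨0, by omega⟩⟩
  have hΩfin : volume Ω < ⊤ := by
    obtain ⟨r, hr⟩ := hΩb.subset_closedBall 0
    exact lt_of_le_of_lt (measure_mono hr) measure_closedBall_lt_top
  have huniv : volume (Set.univ : Set (En n)) = ⊤ :=
    MeasureTheory.measure_univ_of_isAddLeftInvariant volume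
  have hΩc_ne : volume (Ωᶜ : Set (En n)) ≠ 0 := by
    intro h0
    have h1 : volume (Set.univ : Set (En n)) ≤ volume Ω + volume Ωᶜ := by
      rw [← Set.union_compl_self Ω]
      exact measure_union_le _ _
    rw [huniv, h0, add_zero] at h1
    exact hΩfin.ne (top_le_iff.mp h1)
  haveI hNB : (ae (volume.restrict (Ωᶜ : Set (En n)))).NeBot :=
    ae_neBot.mpr (by rwa [Ne, Measure.restrict_eq_zero])
  -- final assembly
  filter_upwards [hslice, hbd] with x Hx hx2
  by_cases hxΩ : x ∈ Ω
  · have hA : ∀ᵐ y ∂(volume.restrict (Ωᶜ : Set (En n))), y ∉ Ω → φ y = 0 :=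
      ae_restrict_of_ae hbdφ
    have hB : ∀ᵐ y ∂(volume.restrict (Ωᶜ : Set (En n))), y ∈ (Ωᶜ : Set (En n)) :=
      ae_restrict_mem hΩm.compl
    have hC : ∀ᵐ y ∂(volume.restrict (Ωᶜ : Set (En n))),
        ((x, y) ∈ R2n n Ω → (φ x = φ y ∨ x = y)) := ae_restrict_of_ae Hx
    have hD : ∀ᵐ y ∂(volume.restrict (Ωᶜ : Set (En n))), y ≠ x := by
      refine ae_restrict_of_ae ?_
      rw [ae_iff]
      simpa using measure_singleton (α := En n) x
    obtain ⟨y, ⟨⟨hy1, hy2⟩, hy3⟩, hy4⟩ := (((hA.and hB).and hC).and hD).exists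
    have hymem : (x, y) ∈ R2n n Ω := by
      intro hmem
      exact hmem.1 hxΩ
    rcases hy3 hymem with h | h
    · have hφy : φ y = 0 := hy1 hy2
      calc u x ≤ φ x := le_max_left _ _
        _ = 0 := by rw [h, hφy]
    · exact absurd h.symm hy4
  · have := hx2 hxΩ
    exact this
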